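/- Assume there exists K > 0 with ρ₀ ≤ K ρ_{p,0}, ρ₁ ≤ K ρ_{p,1} and ρ ≤ K ρ_{p,2} in Q_T. If ((y,p),(λ,μ)) ∈ U × X is the solution of the first-order mixed formulation, then there exists C > 0 such that ‖ρ_{p,0}⁻¹y‖_{L²(Q_T)} + ‖ρ_{p,1}⁻¹p‖_{L²(Q_T)} ≤ C ‖(y,p)‖_U ≤ C ‖ρ₀⁻¹y_obs‖_{L²(q_T)}. -/
import Mathlib


open scoped RealInnerProductSpace

/-!
Abstract formalization of Corollary 3.1 of Cîndea–Münch (stability of the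
solution of the first-order mixed formulation in the Carleman-weighted
norms).

Setting (see Statements 9 and 12): `U` is the completion of
`U₀ = {(y,p) ∈ C¹(Q̄_T) × C¹(Q̄_T)^N : y = 0 on Σ_T}` for
`‖(y,p)‖²_U = ‖ρ₀⁻¹y‖²_{L²(q_T)} + η₁‖ρ₁⁻¹J(y,p)‖² + η₂‖ρ⁻¹I(y,p)‖²`
(hypothesis `hnormU`); `obsU u = ρ₀⁻¹ y|_{q_T}`, `Jm u = ρ₁⁻¹ J(y,p)`,
`Im u = ρ⁻¹ I(y,p)`, `g = ρ₀⁻¹ y_obs`.  The maps associated with the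
Imanuvilov–Puel–Yamamoto weights are `obsp u = ρ_{p,0}⁻¹y|_{q_T}`,
`Jp u = ρ_{p,1}⁻¹J(y,p)`, `Ip u = ρ_{p,2}⁻¹I(y,p)`, `W0 u = ρ_{p,0}⁻¹y`
(on `Q_T`) and `W2 u = ρ_{p,1}⁻¹p`.

The hypothesis (3.13) `ρ₀ ≤ Kρ_{p,0}`, `ρ₁ ≤ Kρ_{p,1}`, `ρ ≤ Kρ_{p,2}` in
`Q_T` is recorded through its consequences `hcmp₀`, `hcmp₁`, `hcmp₂`
(continuity of the embedding `U ⊂ U_p`), and the weighted estimate (3.12) of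
Proposition 3.2 on `U_p` is the hypothesis `hEst`.

Statement: if `((y,p),(λ,μ))` solves the first-order mixed formulation, then
there exists `C > 0` such that
`‖ρ_{p,0}⁻¹y‖_{L²(Q_T)} + ‖ρ_{p,1}⁻¹p‖_{L²(Q_T)} ≤ C‖(y,p)‖_U
 ≤ C‖ρ₀⁻¹y_obs‖_{L²(q_T)}`.
-/
theorem firstOrder_carleman_stability
    {U HQ VQ Hq : Type*}
    [NormedAddCommGroup U] [InnerProductSpace ℝ U] [CompleteSpace U]
    [NormedAddCommGroup HQ] [InnerProductSpace ℝ HQ] [CompleteSpace HQ]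
    [NormedAddCommGroup VQ] [InnerProductSpace ℝ VQ] [CompleteSpace VQ]
    [NormedAddCommGroup Hq] [InnerProductSpace ℝ Hq] [CompleteSpace Hq]
    (obsU obsp : U →L[ℝ] Hq) (Jm Jp : U →L[ℝ] VQ) (Im Ip : U →L[ℝ] HQ)
    (W0 : U →L[ℝ] HQ) (W2 : U →L[ℝ] VQ)
    (η₁ η₂ : ℝ) (hη₁ : 0 < η₁) (hη₂ : 0 < η₂)
    (hnormU : ∀ u : U,
      ‖u‖ ^ 2 = ‖obsU u‖ ^ 2 + η₁ * ‖Jm u‖ ^ 2 + η₂ * ‖Im u‖ ^ 2)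
    -- the comparison hypothesis (3.13): ρ₀ ≤ Kρ_{p,0}, ρ₁ ≤ Kρ_{p,1}, ρ ≤ Kρ_{p,2}
    (K : ℝ) (hK : 0 < K)
    (hcmp₀ : ∀ u : U, ‖obsp u‖ ≤ K * ‖obsU u‖)
    (hcmp₁ : ∀ u : U, ‖Jp u‖ ≤ K * ‖Jm u‖)
    (hcmp₂ : ∀ u : U, ‖Ip u‖ ≤ K * ‖Im u‖)
    -- the weighted estimate (3.12) on the Carleman-weighted completion U_p
    (C₀ : ℝ) (hC₀ : 0 < C₀)
    (hEst : ∀ u : U, ‖W0 u‖ ^ 2 + ‖W2 u‖ ^ 2 ≤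
      C₀ * (‖obsp u‖ ^ 2 + η₁ * ‖Jp u‖ ^ 2 + η₂ * ‖Ip u‖ ^ 2))
    (g : Hq) (u : U) (lam : HQ) (mu : VQ)
    -- ((y,p),(λ,μ)) solves the first-order mixed formulation (3.5)
    (hsol : (∀ ub : U,
        ⟪obsU u, obsU ub⟫ + (⟪Jm ub, mu⟫ + ⟪Im ub, lam⟫) = ⟪obsU ub, g⟫) ∧
      (∀ (lamb : HQ) (mub : VQ), ⟪Jm u, mub⟫ + ⟪Im u, lamb⟫ = 0)) :
    ∃ C > 0, ‖W0 u‖ + ‖W2 u‖ ≤ C * ‖u‖ ∧ C * ‖u‖ ≤ C * ‖g‖ := by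
  obtain ⟨h1, h2⟩ := hsol
  have hz := h2 (Im u) (Jm u)
  rw [real_inner_self_eq_norm_sq, real_inner_self_eq_norm_sq] at hz
  have hJ : ‖Jm u‖ = 0 := by nlinarith [norm_nonneg (Jm u), norm_nonneg (Im u)]
  have hI : ‖Im u‖ = 0 := by nlinarith [norm_nonneg (Jm u), norm_nonneg (Im u)]
  have hu2 : ‖u‖ ^ 2 = ‖obsU u‖ ^ 2 := by rw [hnormU u, hJ, hI]; ring
  have hu : ‖u‖ = ‖obsU u‖ := by
    nlinarith [norm_nonneg u, norm_nonneg (obsU u)]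
  -- ‖u‖ ≤ ‖g‖
  have h1u := h1 u
  rw [h2 lam mu, real_inner_self_eq_norm_sq] at h1u
  have hle : ‖obsU u‖ ^ 2 ≤ ‖obsU u‖ * ‖g‖ := by
    calc ‖obsU u‖ ^ 2 = ‖obsU u‖ ^ 2 + 0 := by ring
    _ = ⟪obsU u, g⟫ := h1u
    _ ≤ ‖obsU u‖ * ‖g‖ := real_inner_le_norm _ _
  have hug : ‖u‖ ≤ ‖g‖ := by
    rcases eq_or_lt_of_le (norm_nonneg (obsU u)) with h | h
    · rw [hu, ← h]; exact norm_nonneg g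
    · rw [hu]; nlinarith
  -- the estimate
  have hJp : ‖Jp u‖ = 0 := le_antisymm (by simpa [hJ] using hcmp₁ u) (norm_nonneg _)
  have hIp : ‖Ip u‖ = 0 := le_antisymm (by simpa [hI] using hcmp₂ u) (norm_nonneg _)
  have hEstu := hEst u
  rw [hJp, hIp] at hEstu
  have hbound : ‖W0 u‖ ^ 2 + ‖W2 u‖ ^ 2 ≤ C₀ * K ^ 2 * ‖u‖ ^ 2 := by
    have := hcmp₀ u
    have h0 : ‖obsp u‖ ^ 2 ≤ (K * ‖obsU u‖) ^ 2 := by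
      nlinarith [norm_nonneg (obsp u), norm_nonneg (obsU u)]
    rw [hu2]; nlinarith
  set C : ℝ := Real.sqrt (2 * C₀) * K with hC
  have hCpos : 0 < C := mul_pos (Real.sqrt_pos.2 (by linarith)) hK
  refine ⟨C, hCpos, ?_, by nlinarith⟩
  have hsq : (‖W0 u‖ + ‖W2 u‖) ^ 2 ≤ (C * ‖u‖) ^ 2 := by
    have hC2 : C ^ 2 = 2 * C₀ * K ^ 2 := by
      rw [hC, mul_pow, Real.sq_sqrt (by linarith)]
    have he : (C * ‖u‖) ^ 2 = 2 * C₀ * K ^ 2 * ‖u‖ ^ 2 := by rw [mul_pow, hC2]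
    rw [he]
    calc (‖W0 u‖ + ‖W2 u‖) ^ 2
        = ‖W0 u‖ ^ 2 + ‖W2 u‖ ^ 2 + 2 * ‖W0 u‖ * ‖W2 u‖ := by ring
      _ ≤ (‖W0 u‖ ^ 2 + ‖W2 u‖ ^ 2) + (‖W0 u‖ ^ 2 + ‖W2 u‖ ^ 2) := by
          linarith [two_mul_le_add_sq ‖W0 u‖ ‖W2 u‖]
      _ ≤ 2 * C₀ * K ^ 2 * ‖u‖ ^ 2 := by linarith
  have := Real.sqrt_le_sqrt hsq
  rwa [Real.sqrt_sq (by positivity), Real.sqrt_sq (by positivity)] at this
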